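/- Let 𝔽 be a field and let M and N be m×m matrices over 𝔽. For nonsingular matrices of the form occurring in the left-hand reduction: if the bangles ℒ_k(M) and ℒ_k(N) (built from M and N by bordering with identity blocks I_{r_2},…,I_{r_k} as in equation (el.2) of the paper) are *congruent as bangles, then M and N are *congruent as bangles, and conversely. -/

import Mathlib

open Matrix

/-- Column index type of a bangle `M = [⟦M₁⟧ | M₂ | … | M_t]` whose boxed (first) strip
`M₁` is `m × m`, whose strips `M₂,…,M_k` have widths `r 0,…,r (k-2)` (the bordering sizes
`r₂,…,r_k`), and whose strips `M_{k+1},…,M_t` have widths `w`. -/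
abbrev MCol (t k m : ℕ) (r : Fin (k - 1) → ℕ) (w : Fin (t - k) → ℕ) : Type :=
  Fin m ⊕ (((i : Fin (k - 1)) × Fin (r i)) ⊕ ((i : Fin (t - k)) × Fin (w i)))

/-- Strip number of a column of `M`: `M₁` is strip `0`, `M_{i+2}` is strip `i+1`,
`M_{k+1+i}` is strip `k+i`. -/
def stripM (t k m : ℕ) (r : Fin (k - 1) → ℕ) (w : Fin (t - k) → ℕ)
    (hk1 : 1 ≤ k) (hkt : k ≤ t) : MCol t k m r w → Fin t
  | Sum.inl _ => ⟨0, by omega⟩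
  | Sum.inr (Sum.inl ⟨i, _⟩) => ⟨(i : ℕ) + 1, by have := i.isLt; omega⟩
  | Sum.inr (Sum.inr ⟨i, _⟩) => ⟨k + (i : ℕ), by have := i.isLt; omega⟩

/-- Row index type of the bangle `ℒ_k(M)`: the first horizontal strip has height `m`,
followed by horizontal strips of heights `r₂,…,r_k`. -/
abbrev LRow (k m : ℕ) (r : Fin (k - 1) → ℕ) : Type :=
  Fin m ⊕ ((i : Fin (k - 1)) × Fin (r i))

/-- Column index type of `ℒ_k(M)`: the unboxed left strips consist of the bordering
identity columns (the columns of `I_{r i}` belong to strip `k-2-i`), the boxed strip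
(strip `k-1`) is square with columns indexed by the rows, and the right strips have
widths `w`. -/
abbrev LCol (t k m : ℕ) (r : Fin (k - 1) → ℕ) (w : Fin (t - k) → ℕ) : Type :=
  ((i : Fin (k - 1)) × Fin (r i)) ⊕ (LRow k m r ⊕ ((i : Fin (t - k)) × Fin (w i)))

/-- Strip number of a column of `ℒ_k(M)`. -/
def stripL (t k m : ℕ) (r : Fin (k - 1) → ℕ) (w : Fin (t - k) → ℕ)
    (hk1 : 1 ≤ k) (hkt : k ≤ t) : LCol t k m r w → Fin t
  | Sum.inl ⟨i, _⟩ => ⟨k - 2 - (i : ℕ), by have := i.isLt; omega⟩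
  | Sum.inr (Sum.inl _) => ⟨k - 1, by omega⟩
  | Sum.inr (Sum.inr ⟨i, _⟩) => ⟨k + (i : ℕ), by have := i.isLt; omega⟩

/-- The bangle `ℒ_k(M)` obtained from `M` by bordering with identity blocks
`I_{r₂},…,I_{r_k}`:  the left strips are the identity columns (`I_{r i}` sitting in the
horizontal strip labelled `i`), the boxed strip has first block row `(M₁ M₂ … M_k)` and
zero block rows below, and the right strips have first block row `M_{k+1},…,M_t` and
zeros below. -/
def LofM {F : Type} [Field F] (t k m : ℕ) (r : Fin (k - 1) → ℕ) (w : Fin (t - k) → ℕ)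
    (M : Matrix (Fin m) (MCol t k m r w) F) :
    Matrix (LRow k m r) (LCol t k m r w) F :=
  Matrix.of fun rr cc =>
    match rr, cc with
    | Sum.inl _, Sum.inl _ => 0
    | Sum.inr ⟨i', b⟩, Sum.inl ⟨i, c⟩ =>
        if (i' : ℕ) = (i : ℕ) ∧ (b : ℕ) = (c : ℕ) then 1 else 0
    | Sum.inl a, Sum.inr (Sum.inl (Sum.inl b)) => M a (Sum.inl b)
    | Sum.inl a, Sum.inr (Sum.inl (Sum.inr z)) => M a (Sum.inr (Sum.inl z))
    | Sum.inl a, Sum.inr (Sum.inr y) => M a (Sum.inr (Sum.inr y))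
    | Sum.inr _, Sum.inr _ => 0

/-- *Congruence of bangles, for a bangle with rows `R`, columns `C`, strip numbering
`strip : C → Fin t` and boxed-strip inclusion `β : R → C`:
`B = S_{kk}ᴴ A S` with `S` nonsingular and upper block-triangular. -/
def BangleStarCongr {F : Type} [Field F] [StarRing F] {R C : Type}
    [Fintype R] [Fintype C] [DecidableEq C] {t : ℕ}
    (strip : C → Fin t) (β : R → C) (A B : Matrix R C F) : Prop :=
  ∃ S : Matrix C C F,
    IsUnit S ∧ (∀ p q, strip q < strip p → S p q = 0) ∧
    B = (S.submatrix β β)ᴴ * A * S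

-- ## Auxiliary

/-- The equivalence between `MCol` and the reassociated sum. -/
def eMC (t k m : ℕ) (r : Fin (k - 1) → ℕ) (w : Fin (t - k) → ℕ) :
    MCol t k m r w ≃ (Fin m ⊕ ((i : Fin (k - 1)) × Fin (r i))) ⊕ ((i : Fin (t - k)) × Fin (w i))
    where
  toFun := fun x => match x with
    | .inl a => .inl (.inl a)
    | .inr (.inl z) => .inl (.inr z)
    | .inr (.inr y) => .inr y
  invFun := fun c => match c with
    | .inl (.inl a) => .inl a
    | .inl (.inr z) => .inr (.inl z)
    | .inr y => .inr (.inr y)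
  left_inv := by rintro (a | z | y) <;> rfl
  right_inv := by rintro ((a | z) | y) <;> rfl

lemma sigma_eq_iff {k : ℕ} {r : Fin (k - 1) → ℕ} (z z' : (i : Fin (k - 1)) × Fin (r i)) :
    ((z.1 : ℕ) = (z'.1 : ℕ) ∧ (z.2 : ℕ) = (z'.2 : ℕ)) ↔ z = z' := by
  constructor
  · rintro ⟨h1, h2⟩
    rcases z with ⟨i, b⟩; rcases z' with ⟨j, c⟩
    dsimp at h1 h2
    have hij : i = j := Fin.ext h1
    subst hij
    have : b = c := Fin.ext h2
    subst this
    rfl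
  · rintro rfl; exact ⟨rfl, rfl⟩

lemma LofM_eq {F : Type} [Field F] (t k m : ℕ) (r : Fin (k - 1) → ℕ) (w : Fin (t - k) → ℕ)
    (M : Matrix (Fin m) (MCol t k m r w) F) :
    LofM t k m r w M =
      fromBlocks 0 (M.submatrix id ⇑(eMC t k m r w).symm) 1 0 := by
  ext rr cc
  rcases rr with a | ⟨i', b⟩ <;> rcases cc with ⟨i, c⟩ | ((a' | z) | y) <;>
    simp only [LofM, Matrix.of_apply, fromBlocks_apply₁₁, fromBlocks_apply₁₂,
      fromBlocks_apply₂₁, fromBlocks_apply₂₂, Matrix.submatrix_apply, Matrix.zero_apply,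
      Matrix.one_apply, eMC, Equiv.coe_fn_symm_mk, id_eq] <;>
    try rfl
  exact if_congr (sigma_eq_iff ⟨i', b⟩ ⟨i, c⟩) rfl rfl


/-- The bangles `ℒ_k(M)` and `ℒ_k(N)` are *congruent if and only if the bangles
`M` and `N` are *congruent. -/
theorem left_reduction_star_congruence {F : Type} [Field F] [StarRing F]
    (t k m : ℕ) (hk1 : 1 ≤ k) (hkt : k ≤ t)
    (r : Fin (k - 1) → ℕ) (w : Fin (t - k) → ℕ)
    (M N : Matrix (Fin m) (MCol t k m r w) F) :
    BangleStarCongr (stripL t k m r w hk1 hkt) (fun x => Sum.inr (Sum.inl x))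
        (LofM t k m r w M) (LofM t k m r w N) ↔
      BangleStarCongr (stripM t k m r w hk1 hkt) Sum.inl M N := by
  set e := eMC t k m r w with he
  set M' := M.submatrix id ⇑e.symm with hM'
  set N' := N.submatrix id ⇑e.symm with hN'
  constructor
  · rintro ⟨S', hu, htri, heq⟩
    -- blocks of S'
    set S₁ : Matrix ((i : Fin (k-1)) × Fin (r i)) ((i : Fin (k-1)) × Fin (r i)) F :=
      fun z z' => S' (.inl z) (.inl z') with hS₁
    set S₂ : Matrix ((i : Fin (k-1)) × Fin (r i)) (LRow k m r ⊕ ((i : Fin (t-k)) × Fin (w i))) F :=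
      fun z c => S' (.inl z) (.inr c) with hS₂
    set S₄ : Matrix (LRow k m r ⊕ ((i : Fin (t-k)) × Fin (w i)))
        (LRow k m r ⊕ ((i : Fin (t-k)) × Fin (w i))) F :=
      fun c c' => S' (.inr c) (.inr c') with hS₄
    have hS3 : ∀ c z, S' (.inr c) (.inl z) = 0 := by
      rintro ((a | z') | y) ⟨i, b⟩ <;>
      · apply htri
        simp only [stripL, Fin.lt_def]
        omega
    have hS'blocks : S' = fromBlocks S₁ S₂ 0 S₄ := by
      ext (z | c) (z' | c')
      · rfl
      · rfl
      · simpa using hS3 c z'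
      · rfl
    -- blocks of G
    set G₁₁ : Matrix (Fin m) (Fin m) F :=
      fun a a' => S' (.inr (.inl (.inl a))) (.inr (.inl (.inl a'))) with hG₁₁
    set G₁₂ : Matrix (Fin m) ((i : Fin (k-1)) × Fin (r i)) F :=
      fun a z => S' (.inr (.inl (.inl a))) (.inr (.inl (.inr z))) with hG₁₂
    set G₂₁ : Matrix ((i : Fin (k-1)) × Fin (r i)) (Fin m) F :=
      fun z a => S' (.inr (.inl (.inr z))) (.inr (.inl (.inl a))) with hG₂₁
    set G₂₂ : Matrix ((i : Fin (k-1)) × Fin (r i)) ((i : Fin (k-1)) × Fin (r i)) F :=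
      fun z z' => S' (.inr (.inl (.inr z))) (.inr (.inl (.inr z'))) with hG₂₂
    have hGblocks : S'.submatrix (fun x : LRow k m r => Sum.inr (Sum.inl x))
        (fun x : LRow k m r => Sum.inr (Sum.inl x)) = fromBlocks G₁₁ G₁₂ G₂₁ G₂₂ := by
      ext (a | z) (a' | z') <;> rfl
    rw [LofM_eq, LofM_eq, hGblocks, hS'blocks] at heq
    rw [fromBlocks_conjTranspose, fromBlocks_multiply, fromBlocks_multiply] at heq
    simp only [Matrix.mul_zero, Matrix.zero_mul, Matrix.mul_one, Matrix.one_mul,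
      add_zero, zero_add] at heq
    have e0 : (0 : Matrix (Fin m) _ F) = G₂₁ᴴ * S₁ := congrArg Matrix.toBlocks₁₁ heq
    have e1 : (1 : Matrix ((i : Fin (k-1)) × Fin (r i)) _ F) = G₂₂ᴴ * S₁ :=
      congrArg Matrix.toBlocks₂₁ heq
    have eN : N' = G₂₁ᴴ * S₂ + G₁₁ᴴ * M' * S₄ := by
      have h := congrArg Matrix.toBlocks₁₂ heq
      simp only [Matrix.toBlocks_fromBlocks₁₂] at h
      rw [← he] at h
      rw [← hM', ← hN'] at h
      exact h
    have hS1G : S₁ * G₂₂ᴴ = 1 := mul_eq_one_comm.mp e1.symm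
    have hG21H : G₂₁ᴴ = 0 := by
      calc G₂₁ᴴ = G₂₁ᴴ * (S₁ * G₂₂ᴴ) := by rw [hS1G, Matrix.mul_one]
        _ = (G₂₁ᴴ * S₁) * G₂₂ᴴ := by rw [Matrix.mul_assoc]
        _ = 0 := by rw [← e0, Matrix.zero_mul]
    have hG21 : G₂₁ = (0 : Matrix _ _ F) := by
      have := congrArg Matrix.conjTranspose hG21H
      simpa using this
    have eN' : N' = G₁₁ᴴ * M' * S₄ := by rw [eN, hG21H, Matrix.zero_mul, zero_add]
    -- the constructed S
    refine ⟨S₄.submatrix ⇑e ⇑e, ?_, ?_, ?_⟩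
    · have hdetS' : IsUnit S'.det := (Matrix.isUnit_iff_isUnit_det S').mp hu
      rw [hS'blocks, Matrix.det_fromBlocks_zero₂₁] at hdetS'
      have h4 : IsUnit (Matrix.det S₄) := isUnit_of_mul_isUnit_right hdetS'
      rw [Matrix.isUnit_iff_isUnit_det, Matrix.det_submatrix_equiv_self]
      exact h4
    · -- triangularity
      have hS1unit : IsUnit S₁ :=
        (Matrix.isUnit_iff_isUnit_det S₁).mpr (Matrix.isUnit_det_of_left_inverse e1.symm)
      haveI : Invertible S₁ :=
        Matrix.invertibleOfIsUnitDet S₁ ((Matrix.isUnit_iff_isUnit_det S₁).mp hS1unit)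
      have htriS₁ : S₁.BlockTriangular (fun z : (i : Fin (k-1)) × Fin (r i) => k - 2 - (z.1 : ℕ)) := by
        rintro ⟨i, b⟩ ⟨j, c⟩ h
        apply htri
        simp only [stripL, Fin.lt_def]
        exact h
      have htriInv := Matrix.blockTriangular_inv_of_blockTriangular htriS₁
      have hinvS₁ : S₁⁻¹ = G₂₂ᴴ := Matrix.inv_eq_left_inv e1.symm
      have hG22 : ∀ z z' : (i : Fin (k-1)) × Fin (r i), ((z'.1 : ℕ) < (z.1 : ℕ)) →
          G₂₂ z z' = 0 := by
        intro z z' h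
        have hb := z.1.isLt
        have hb' := z'.1.isLt
        have h0 : G₂₂ᴴ z' z = 0 := by
          rw [← hinvS₁]
          exact htriInv (show (k - 2 - (z.1 : ℕ)) < k - 2 - (z'.1 : ℕ) by omega)
        have : star (G₂₂ z z') = 0 := h0
        simpa using congrArg star this
      rintro (a | z | y) (a' | z' | y') hlt <;>
        simp only [stripM, Fin.lt_def] at hlt
      · omega
      · omega
      · omega
      · exact congrFun (congrFun hG21 z) a'
      · exact hG22 z z' (by omega)
      · omega
      · show S' (Sum.inr (Sum.inr y)) (Sum.inr (Sum.inl (Sum.inl a'))) = 0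
        exact htri _ _ (by simp only [stripL, Fin.lt_def]; omega)
      · show S' (Sum.inr (Sum.inr y)) (Sum.inr (Sum.inl (Sum.inr z'))) = 0
        exact htri _ _ (by simp only [stripL, Fin.lt_def]; omega)
      · show S' (Sum.inr (Sum.inr y)) (Sum.inr (Sum.inr y')) = 0
        rcases y with ⟨iy, by_⟩; rcases y' with ⟨iy', by'⟩
        dsimp only at hlt
        exact htri _ _ (by simp only [stripL, Fin.lt_def]; omega)
    · -- the congruence equation
      have hsub : (S₄.submatrix ⇑e ⇑e).submatrix Sum.inl Sum.inl = G₁₁ := rfl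
      rw [hsub]
      have hM : M = M'.submatrix id ⇑e := by
        ext a c; simp [hM']
      have hmul : M * S₄.submatrix ⇑e ⇑e = (M' * S₄).submatrix id ⇑e := by
        rw [hM, Matrix.submatrix_mul_equiv]
      have hmulsub : ∀ (X : Matrix (Fin m) (Fin m) F) (Y : Matrix (Fin m) _ F),
          X * (Y.submatrix id ⇑e) = (X * Y).submatrix id ⇑e := by
        intro X Y; ext a q; simp [Matrix.mul_apply]
      calc N = N'.submatrix id ⇑e := by ext a q; simp [hN']
        _ = (G₁₁ᴴ * M' * S₄).submatrix id ⇑e := by rw [eN']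
        _ = G₁₁ᴴ * ((M' * S₄).submatrix id ⇑e) := by
              rw [hmulsub, Matrix.mul_assoc]
        _ = G₁₁ᴴ * (M * S₄.submatrix ⇑e ⇑e) := by rw [hmul]
        _ = G₁₁ᴴ * M * S₄.submatrix ⇑e ⇑e := by rw [Matrix.mul_assoc]
  · rintro ⟨S, hu, htri, heq⟩
    set G₁₁ : Matrix (Fin m) (Fin m) F := fun a a' => S (.inl a) (.inl a') with hG₁₁
    set G₁₂ : Matrix (Fin m) ((i : Fin (k-1)) × Fin (r i)) F :=
      fun a z => S (.inl a) (.inr (.inl z)) with hG₁₂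
    set G₂₂ : Matrix ((i : Fin (k-1)) × Fin (r i)) ((i : Fin (k-1)) × Fin (r i)) F :=
      fun z z' => S (.inr (.inl z)) (.inr (.inl z')) with hG₂₂
    have hz1 : ∀ z a, S (.inr (.inl z)) (.inl a) = 0 := by
      rintro ⟨i, b⟩ a
      exact htri _ _ (by simp only [stripM, Fin.lt_def]; omega)
    have hz2 : ∀ y a, S (.inr (.inr y)) (.inl a) = 0 := by
      rintro ⟨i, b⟩ a
      exact htri _ _ (by simp only [stripM, Fin.lt_def]; omega)
    have hz3 : ∀ y z, S (.inr (.inr y)) (.inr (.inl z)) = 0 := by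
      rintro ⟨i, b⟩ ⟨j, c⟩
      exact htri _ _ (by simp only [stripM, Fin.lt_def]; omega)
    -- determinant facts
    set T₁₂ : Matrix (Fin m) (((i : Fin (k-1)) × Fin (r i)) ⊕ ((i : Fin (t-k)) × Fin (w i))) F :=
      fun a c => S (.inl a) (.inr c) with hT₁₂
    set T₂₂ : Matrix (((i : Fin (k-1)) × Fin (r i)) ⊕ ((i : Fin (t-k)) × Fin (w i)))
        (((i : Fin (k-1)) × Fin (r i)) ⊕ ((i : Fin (t-k)) × Fin (w i))) F :=
      fun c c' => S (.inr c) (.inr c') with hT₂₂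
    set X : Matrix ((i : Fin (k-1)) × Fin (r i)) ((i : Fin (t-k)) × Fin (w i)) F :=
      fun z y => S (.inr (.inl z)) (.inr (.inr y)) with hX
    set Z : Matrix ((i : Fin (t-k)) × Fin (w i)) ((i : Fin (t-k)) × Fin (w i)) F :=
      fun y y' => S (.inr (.inr y)) (.inr (.inr y')) with hZ
    have hS : S = fromBlocks G₁₁ T₁₂ 0 T₂₂ := by
      ext (a | c) (a' | c')
      · rfl
      · rfl
      · rcases c with z | y
        · simpa using hz1 z a'
        · simpa using hz2 y a'
      · rfl
    have hT : T₂₂ = fromBlocks G₂₂ X 0 Z := by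
      ext (z | y) (z' | y')
      · rfl
      · rfl
      · simpa using hz3 y z'
      · rfl
    have hdet : IsUnit S.det := (Matrix.isUnit_iff_isUnit_det S).mp hu
    rw [hS, Matrix.det_fromBlocks_zero₂₁, hT, Matrix.det_fromBlocks_zero₂₁] at hdet
    have hdetG : IsUnit G₂₂.det :=
      isUnit_of_mul_isUnit_left (isUnit_of_mul_isUnit_right hdet)
    have hdetGH : IsUnit (G₂₂ᴴ).det := by
      rw [Matrix.det_conjTranspose]; exact hdetG.star
    set Sh₄ : Matrix ((Fin m ⊕ ((i : Fin (k-1)) × Fin (r i))) ⊕ ((i : Fin (t-k)) × Fin (w i)))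
        ((Fin m ⊕ ((i : Fin (k-1)) × Fin (r i))) ⊕ ((i : Fin (t-k)) × Fin (w i))) F :=
      S.submatrix ⇑e.symm ⇑e.symm with hSh₄
    set Sh₁ : Matrix ((i : Fin (k-1)) × Fin (r i)) ((i : Fin (k-1)) × Fin (r i)) F :=
      (G₂₂ᴴ)⁻¹ with hSh₁def
    have hSh₁ : G₂₂ᴴ * Sh₁ = 1 := Matrix.mul_nonsing_inv _ hdetGH
    set Sh₂ : Matrix ((i : Fin (k-1)) × Fin (r i))
        ((Fin m ⊕ ((i : Fin (k-1)) × Fin (r i))) ⊕ ((i : Fin (t-k)) × Fin (w i))) F :=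
      -(Sh₁ * (G₁₂ᴴ * (M' * Sh₄))) with hSh₂def
    refine ⟨fromBlocks Sh₁ Sh₂ 0 Sh₄, ?_, ?_, ?_⟩
    · rw [Matrix.isUnit_iff_isUnit_det, Matrix.det_fromBlocks_zero₂₁]
      refine IsUnit.mul (Matrix.isUnit_nonsing_inv_det _ hdetGH) ?_
      rw [hSh₄, Matrix.det_submatrix_equiv_self]
      exact (Matrix.isUnit_iff_isUnit_det S).mp hu
    · -- triangularity
      have htriGH : G₂₂ᴴ.BlockTriangular
          (fun z : (i : Fin (k-1)) × Fin (r i) => k - 2 - (z.1 : ℕ)) := by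
        rintro ⟨i, b⟩ ⟨j, c⟩ h
        dsimp only at h
        have hik := i.isLt
        have hjk := j.isLt
        have h0 : S (Sum.inr (Sum.inl ⟨j, c⟩)) (Sum.inr (Sum.inl ⟨i, b⟩)) = 0 :=
          htri _ _ (by simp only [stripM, Fin.lt_def]; omega)
        show star (S (Sum.inr (Sum.inl ⟨j, c⟩)) (Sum.inr (Sum.inl ⟨i, b⟩))) = 0
        rw [h0]
        exact star_zero F
      haveI : Invertible G₂₂ᴴ := Matrix.invertibleOfIsUnitDet _ hdetGH
      have htriInv := Matrix.blockTriangular_inv_of_blockTriangular htriGH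
      rintro (z | ((a | z) | y)) (z' | ((a' | z') | y')) hlt <;>
        simp only [stripL, Fin.lt_def] at hlt
      · exact htriInv hlt
      · omega
      · omega
      · omega
      -- rows inl a (boxed)
      · rfl
      · omega
      · omega
      · omega
      -- rows inr z (boxed)
      · rfl
      · omega
      · omega
      · omega
      -- rows inr y (right strips)
      · rfl
      · exact hz2 y a'
      · exact hz3 y z'
      · rcases y with ⟨iy, by_⟩
        rcases y' with ⟨iy', by'⟩
        dsimp only at hlt
        exact htri (Sum.inr (Sum.inr ⟨iy, by_⟩)) (Sum.inr (Sum.inr ⟨iy', by'⟩))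
          (by simp only [stripM, Fin.lt_def]; omega)
    · -- the congruence equation
      have hsub : (fromBlocks Sh₁ Sh₂ 0 Sh₄).submatrix
          (fun x : LRow k m r => (Sum.inr (Sum.inl x) : LCol t k m r w))
          (fun x : LRow k m r => Sum.inr (Sum.inl x)) = fromBlocks G₁₁ G₁₂ 0 G₂₂ := by
        ext (a | z) (a' | z')
        · rfl
        · rfl
        · exact hz1 z a'
        · rfl
      rw [LofM_eq, LofM_eq, hsub, fromBlocks_conjTranspose, fromBlocks_multiply,
        fromBlocks_multiply]
      simp only [Matrix.mul_zero, Matrix.zero_mul, Matrix.mul_one, Matrix.one_mul,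
        Matrix.conjTranspose_zero, add_zero, zero_add]
      rw [← he, ← hM', ← hN']
      have hMeq : M = M'.submatrix id ⇑e := by ext a c; simp [hM']
      have hSsub : Sh₄.submatrix ⇑e ⇑e = S := by ext p q; simp [hSh₄]
      have hmulsub : ∀ (Xm : Matrix (Fin m) (Fin m) F)
          (Y : Matrix (Fin m) ((Fin m ⊕ ((i : Fin (k-1)) × Fin (r i))) ⊕ ((i : Fin (t-k)) × Fin (w i))) F),
          Xm * (Y.submatrix id ⇑e) = (Xm * Y).submatrix id ⇑e := by
        intro Xm Y; ext a q; simp [Matrix.mul_apply]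
      have hMS : M * S = (M' * Sh₄).submatrix id ⇑e := by
        rw [← hSsub, hMeq, Matrix.submatrix_mul_equiv]
      have h12 : G₁₁ᴴ * M' * Sh₄ = N' := by
        have hNS : N = (G₁₁ᴴ * M' * Sh₄).submatrix id ⇑e := by
          rw [heq, show S.submatrix (Sum.inl : Fin m → MCol t k m r w) Sum.inl = G₁₁ from rfl,
            Matrix.mul_assoc, hMS, hmulsub, ← Matrix.mul_assoc]
        rw [hN', hNS]
        ext a c
        simp
      have h22 : G₂₂ᴴ * Sh₂ + G₁₂ᴴ * M' * Sh₄ = 0 := by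
        rw [hSh₂def, Matrix.mul_neg, ← Matrix.mul_assoc, hSh₁, Matrix.one_mul,
          ← Matrix.mul_assoc]
        exact neg_add_cancel _
      rw [hSh₁, h12, h22]
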